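/- arXiv:1307.4686 — 2 statements merged into one kernel-verified Lean document; each statement's English description precedes it below -/
import Mathlib

section
/- Let a, b ≥ 0 be real numbers. Then |√a − √b| ≤ √|a − b|. More generally, for a twice differentiable nonnegative function f : ℝ → ℝ with |f''| ≤ M, the function √f is Lipschitz with constant √(M/2), i.e., |√(f(x)) − √(f(y))| ≤ √(M/2)·|x − y|. -/
open Real

lemma sqrt_sub_sqrt_le (a b : ℝ) (h0 : 0 ≤ b) (h : b ≤ a) :
    Real.sqrt a - Real.sqrt b ≤ Real.sqrt (a - b) := by
  have h1 : Real.sqrt a ≤ Real.sqrt (a - b) + Real.sqrt b := by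
    rw [← Real.sqrt_sq (by positivity : (0:ℝ) ≤ Real.sqrt (a - b) + Real.sqrt b)]
    apply Real.sqrt_le_sqrt
    nlinarith [Real.sq_sqrt (sub_nonneg.2 h), Real.sq_sqrt h0,
      Real.sqrt_nonneg (a - b), Real.sqrt_nonneg b]
  linarith

lemma taylor_bound (f : ℝ → ℝ) (M : ℝ)
    (hd : ∀ x, DifferentiableAt ℝ f x)
    (hlip : ∀ x y : ℝ, |deriv f y - deriv f x| ≤ M * |y - x|) :
    ∀ x y : ℝ, f y ≤ f x + deriv f x * (y - x) + M / 2 * (y - x) ^ 2 := by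
  intro x y
  set φ : ℝ → ℝ := fun y => f x + deriv f x * (y - x) + M / 2 * (y - x) ^ 2 - f y with hφ
  have hdφ : ∀ z, HasDerivAt φ (deriv f x + M * (z - x) - deriv f z) z := by
    intro z
    have h1 : HasDerivAt (fun y => f x + deriv f x * (y - x) + M / 2 * (y - x) ^ 2)
        (deriv f x + M * (z - x)) z := by
      have : HasDerivAt (fun y : ℝ => f x + deriv f x * (y - x) + M / 2 * (y - x) ^ 2)
          (0 + deriv f x * 1 + M / 2 * (2 * (z - x) ^ 1 * 1)) z := by
        exact ((hasDerivAt_const z (f x)).add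
          (((hasDerivAt_id z).sub_const x).const_mul (deriv f x))).add
          ((((hasDerivAt_id z).sub_const x).pow 2).const_mul (M / 2))
      convert this using 1; ring
    exact h1.sub (hd z).hasDerivAt
  have hmono : ∀ z, x ≤ z → 0 ≤ φ z - φ x := by
    intro z hz
    have := monotoneOn_of_deriv_nonneg (convex_Ici x)
      (fun w _ => ((hdφ w).continuousAt.continuousWithinAt))
      (fun w _ => ((hdφ w).differentiableAt.differentiableWithinAt))
      (fun w hw => by
        rw [(hdφ w).deriv]
        rw [interior_Ici] at hw
        have h2 := hlip x w
        have habs : |w - x| = w - x := abs_of_nonneg (by simp at hw; linarith)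
        rw [habs] at h2
        have := abs_le.1 h2
        linarith [this.1, this.2])
    have := this Set.self_mem_Ici (show z ∈ Set.Ici x from hz) hz
    linarith
  have hanti : ∀ z, z ≤ x → 0 ≤ φ z - φ x := by
    intro z hz
    have := antitoneOn_of_deriv_nonpos (convex_Iic x)
      (fun w _ => ((hdφ w).continuousAt.continuousWithinAt))
      (fun w _ => ((hdφ w).differentiableAt.differentiableWithinAt))
      (fun w hw => by
        rw [(hdφ w).deriv]
        rw [interior_Iic] at hw
        have h2 := hlip x w
        have habs : |w - x| = -(w - x) := abs_of_nonpos (by simp at hw; linarith)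
        rw [habs] at h2
        have := abs_le.1 h2
        linarith [this.1, this.2])
    have := this (show z ∈ Set.Iic x from hz) Set.self_mem_Iic hz
    linarith
  have hφx : φ x = 0 := by simp [hφ]
  rcases le_total x y with h | h
  · have := hmono y h; simp only [hφ] at this hφx ⊢; linarith
  · have := hanti y h; simp only [hφ] at this hφx ⊢; linarith

lemma deriv_sq_le (f : ℝ → ℝ) (M : ℝ) (h0 : ∀ x, 0 ≤ f x)
    (hd : ∀ x, DifferentiableAt ℝ f x)
    (hM : 0 ≤ M)
    (hlip : ∀ x y : ℝ, |deriv f y - deriv f x| ≤ M * |y - x|) :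
    ∀ x, (deriv f x) ^ 2 ≤ 2 * M * f x := by
  intro x
  have key : ∀ s : ℝ, 0 ≤ f x + deriv f x * s + M / 2 * s ^ 2 := by
    intro s
    have := taylor_bound f M hd hlip x (x + s)
    have h1 := h0 (x + s)
    simp only [add_sub_cancel_left] at this
    linarith
  rcases eq_or_lt_of_le hM with hM0 | hM0
  · -- M = 0
    have hz : deriv f x = 0 := by
      by_contra hne
      have h1 := key (-(f x + 1) / deriv f x)
      rw [← hM0] at h1
      have h2 : deriv f x * (-(f x + 1) / deriv f x) = -(f x + 1) := by field_simp
      rw [h2] at h1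
      simp at h1
      linarith [h0 x]
    rw [hz, ← hM0]; simp
  · have h1 := key (-(deriv f x) / M)
    have hMne : M ≠ 0 := ne_of_gt hM0
    have heq : f x + deriv f x * (-(deriv f x) / M) + M / 2 * (-(deriv f x) / M) ^ 2
        = f x - (deriv f x) ^ 2 / (2 * M) := by field_simp; ring
    rw [heq] at h1
    have h2 : (deriv f x) ^ 2 / (2 * M) ≤ f x := by linarith
    calc (deriv f x) ^ 2 = (deriv f x) ^ 2 / (2 * M) * (2 * M) := by field_simp
    _ ≤ f x * (2 * M) := by apply mul_le_mul_of_nonneg_right h2; positivity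
    _ = 2 * M * f x := by ring

theorem stmt_10 :
    (∀ a b : ℝ, 0 ≤ a → 0 ≤ b → |Real.sqrt a - Real.sqrt b| ≤ Real.sqrt |a - b|) ∧
      (∀ (f : ℝ → ℝ) (M : ℝ), (∀ x, 0 ≤ f x) →
        (∀ x, DifferentiableAt ℝ f x) → (∀ x, DifferentiableAt ℝ (deriv f) x) →
        (∀ x, |deriv (deriv f) x| ≤ M) →
        ∀ x y, |Real.sqrt (f x) - Real.sqrt (f y)| ≤ Real.sqrt (M / 2) * |x - y|) := by
  constructor
  · intro a b ha hb
    rcases le_total b a with h | h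
    · rw [abs_of_nonneg (sub_nonneg.2 (Real.sqrt_le_sqrt h)),
        abs_of_nonneg (sub_nonneg.2 h)]
      exact sqrt_sub_sqrt_le a b hb h
    · rw [abs_of_nonpos (sub_nonpos.2 (Real.sqrt_le_sqrt h)),
        abs_of_nonpos (sub_nonpos.2 h), neg_sub, neg_sub]
      exact sqrt_sub_sqrt_le b a ha h
  · intro f M h0 hd hd' hb x y
    have hM : 0 ≤ M := le_trans (abs_nonneg _) (hb 0)
    -- f' is M-Lipschitz
    have hlipW : LipschitzWith M.toNNReal (deriv f) := by
      apply lipschitzWith_of_nnnorm_deriv_le (fun z => hd' z)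
      intro z
      rw [← NNReal.coe_le_coe, coe_nnnorm, Real.coe_toNNReal _ hM, Real.norm_eq_abs]
      exact hb z
    have hlip : ∀ u v : ℝ, |deriv f v - deriv f u| ≤ M * |v - u| := by
      intro u v
      have := hlipW.dist_le_mul v u
      rwa [Real.dist_eq, Real.dist_eq, Real.coe_toNNReal _ hM] at this
    have hkey := deriv_sq_le f M h0 hd hM hlip
    -- For each ε > 0, √(f + ε) is Lipschitz with constant √(M/2)
    have heps : ∀ ε : ℝ, 0 < ε →
        |Real.sqrt (f x + ε) - Real.sqrt (f y + ε)| ≤ Real.sqrt (M / 2) * |x - y| := by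
      intro ε hε
      set g : ℝ → ℝ := fun z => Real.sqrt (f z + ε) with hg
      have hfε : ∀ z, (0:ℝ) < f z + ε := fun z => by linarith [h0 z]
      have hdg : ∀ z, DifferentiableAt ℝ g z := by
        intro z
        exact DifferentiableAt.sqrt ((hd z).add_const ε) (ne_of_gt (hfε z))
      have hderiv : ∀ z, deriv g z = deriv f z / (2 * Real.sqrt (f z + ε)) := by
        intro z
        rw [hg]
        rw [deriv_sqrt ((hd z).add_const ε) (ne_of_gt (hfε z))]
        congr 1
        rw [deriv_add_const]
      have hbound : ∀ z, |deriv g z| ≤ Real.sqrt (M / 2) := by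
        intro z
        rw [hderiv z, abs_div]
        have h1 : |deriv f z| ≤ Real.sqrt (2 * M * (f z + ε)) := by
          rw [← Real.sqrt_sq_eq_abs]
          apply Real.sqrt_le_sqrt
          have := hkey z
          nlinarith [h0 z, hM]
        have h2 : Real.sqrt (2 * M * (f z + ε))
            = 2 * Real.sqrt (M / 2) * Real.sqrt (f z + ε) := by
          rw [show 2 * M * (f z + ε) = (M / 2) * (2^2 * (f z + ε)) by ring,
            Real.sqrt_mul (by positivity), Real.sqrt_mul (by positivity),
            Real.sqrt_sq (by norm_num)]
          ring
        have hs : 0 < Real.sqrt (f z + ε) := Real.sqrt_pos.2 (hfε z)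
        have h3 : |2 * Real.sqrt (f z + ε)| = 2 * Real.sqrt (f z + ε) := by
          rw [abs_of_pos (by linarith)]
        rw [h3]
        rw [div_le_iff₀ (by linarith)]
        calc |deriv f z| ≤ Real.sqrt (2 * M * (f z + ε)) := h1
        _ = Real.sqrt (M / 2) * (2 * Real.sqrt (f z + ε)) := by rw [h2]; ring
      have hgLip : LipschitzWith (Real.sqrt (M / 2)).toNNReal g := by
        apply lipschitzWith_of_nnnorm_deriv_le (fun z => hdg z)
        intro z
        rw [← NNReal.coe_le_coe, coe_nnnorm, Real.coe_toNNReal _ (Real.sqrt_nonneg _),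
          Real.norm_eq_abs]
        exact hbound z
      have := hgLip.dist_le_mul x y
      rwa [Real.dist_eq, Real.dist_eq, Real.coe_toNNReal _ (Real.sqrt_nonneg _)] at this
    -- pass to the limit ε → 0⁺
    have hcont : ContinuousAt (fun ε : ℝ => |Real.sqrt (f x + ε) - Real.sqrt (f y + ε)|) 0 := by
      fun_prop
    have htend : Filter.Tendsto (fun ε : ℝ => |Real.sqrt (f x + ε) - Real.sqrt (f y + ε)|)
        (nhdsWithin 0 (Set.Ioi 0)) (nhds |Real.sqrt (f x) - Real.sqrt (f y)|) := by
      have h := hcont.tendsto.mono_left (nhdsWithin_le_nhds (s := Set.Ioi (0:ℝ)))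
      simpa using h
    refine le_of_tendsto htend ?_
    filter_upwards [self_mem_nhdsWithin] with ε hε
    exact heps ε hε
end

section
/- Let f : ℝ → ℝ be nonnegative and twice differentiable with |f''(x)| ≤ M for all x. Then |f'(x)| ≤ √(2 M f(x)) for every x. -/
theorem stmt_11 (f : ℝ → ℝ) (M : ℝ) (hf0 : ∀ x, 0 ≤ f x)
    (hf1 : ∀ x, DifferentiableAt ℝ f x) (hf2 : ∀ x, DifferentiableAt ℝ (deriv f) x)
    (hM : ∀ x, |deriv (deriv f) x| ≤ M) :
    ∀ x, |deriv f x| ≤ Real.sqrt (2 * M * f x) := by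
  have hM0 : 0 ≤ M := le_trans (abs_nonneg _) (hM 0)
  intro x
  set c := deriv f x with hc
  -- Lipschitz bound on deriv f
  have lip : LipschitzWith M.toNNReal (deriv f) := by
    apply lipschitzWith_of_nnnorm_deriv_le (fun y => hf2 y)
    intro y
    rw [← NNReal.coe_le_coe, coe_nnnorm, Real.coe_toNNReal _ hM0]
    exact hM y
  have lipc : ∀ h : ℝ, |deriv f (x + h) - c| ≤ M * |h| := by
    intro h
    have := lip.dist_le_mul (x + h) x
    rw [Real.dist_eq, Real.dist_eq, Real.coe_toNNReal _ hM0] at this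
    simpa using this
  -- auxiliary function
  set g : ℝ → ℝ := fun h => f (x + h) - f x - c * h - M / 2 * h ^ 2 with hg
  have hgd : ∀ h : ℝ, HasDerivAt g (deriv f (x + h) - c - M * h) h := by
    intro h
    have h1 : HasDerivAt (fun h : ℝ => f (x + h)) (deriv f (x + h)) h := by
      have := ((hf1 (x + h)).hasDerivAt.comp h ((hasDerivAt_id h).const_add x))
      exact this.congr_deriv (mul_one _)
    have h2 : HasDerivAt (fun h : ℝ => c * h) c h := by
      simpa using (hasDerivAt_id h).const_mul c
    have h3 : HasDerivAt (fun h : ℝ => M / 2 * h ^ 2) (M * h) h := by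
      have := ((hasDerivAt_pow 2 h).const_mul (M / 2))
      refine this.congr_deriv ?_
      ring
    have := ((h1.sub_const (f x)).sub h2).sub h3
    exact this
  have hkey : ∀ h : ℝ, 0 ≤ f x + c * h + M / 2 * h ^ 2 := by
    have hg0 : g 0 = 0 := by simp [hg]
    have hgle : ∀ h : ℝ, g h ≤ 0 := by
      intro h
      rcases le_or_gt 0 h with hh | hh
      · -- antitone on Ici 0
        have hanti : AntitoneOn g (Set.Ici 0) := by
          apply antitoneOn_of_deriv_nonpos (convex_Ici 0)
          · exact fun y _ => (hgd y).continuousAt.continuousWithinAt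
          · exact fun y _ => (hgd y).differentiableAt.differentiableWithinAt
          · intro y hy
            rw [interior_Ici] at hy
            rw [(hgd y).deriv]
            have := lipc y
            rw [abs_of_pos (a := y) hy] at this
            have := abs_le.1 this
            linarith [this.2]
        have := hanti (Set.self_mem_Ici) (Set.mem_Ici.2 hh) hh
        rw [hg0] at this; exact this
      · have hmono : MonotoneOn g (Set.Iic 0) := by
          apply monotoneOn_of_deriv_nonneg (convex_Iic 0)
          · exact fun y _ => (hgd y).continuousAt.continuousWithinAt
          · exact fun y _ => (hgd y).differentiableAt.differentiableWithinAt
          · intro y hy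
            rw [interior_Iic] at hy
            rw [(hgd y).deriv]
            have := lipc y
            have hy' : |y| = -y := abs_of_neg hy
            rw [hy'] at this
            have := abs_le.1 this
            linarith [this.1]
        have := hmono (Set.mem_Iic.2 hh.le) Set.self_mem_Iic hh.le
        rw [hg0] at this; exact this
    intro h
    have h1 := hgle h
    have h2 := hf0 (x + h)
    simp only [hg] at h1
    linarith
  -- conclude
  rcases eq_or_lt_of_le hM0 with hMz | hMpos
  · -- M = 0 : c = 0
    have hc0 : c = 0 := by
      by_contra hne
      rcases lt_or_gt_of_ne hne with hneg | hpos
      · have := hkey (-(f x + 1) / c)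
        rw [← hMz] at this
        field_simp at this
        rw [le_div_iff₀ (by positivity)] at this
        nlinarith [sq_pos_of_ne_zero hne]
      · have := hkey (-(f x + 1) / c)
        rw [← hMz] at this
        field_simp at this
        nlinarith [sq_pos_of_ne_zero hne]
    rw [hc0]
    simp [Real.sqrt_nonneg]
  · have := hkey (-c / M)
    have hsq : c ^ 2 ≤ 2 * M * f x := by
      have e : f x + c * (-c / M) + M / 2 * (-c / M) ^ 2 = f x - c ^ 2 / (2 * M) := by
        field_simp; ring
      rw [e] at this
      have h2 : c ^ 2 / (2 * M) ≤ f x := by linarith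
      have := (div_le_iff₀ (by positivity : (0:ℝ) < 2 * M)).1 h2
      linarith
    rw [← Real.sqrt_sq_eq_abs]
    exact Real.sqrt_le_sqrt hsq
end
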